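/- Let (E_k)_{k≥1} be nonnegative reals satisfying E_{k+1} ≤ (1 - 9δ/(δ(k-1)+9)) E_k + C/(δ(k-1)+9)^{4/3} for all k ≥ 1, where δ ∈ (0,1] and C ≥ 0. Then for all k ≥ 1: E_{k+1} ≤ 9^{1/3} (C/δ + E_1) / (δ(k-1)+9)^{1/3}. -/

import Mathlib

lemma shcgm_key (x δ B : ℝ) (hx : 9 ≤ x) (hδ : 0 < δ) (hB : 0 ≤ B) :
    (1 - 9 * δ / (x + δ)) * ((9:ℝ) ^ ((1:ℝ)/3) * B / x ^ ((1:ℝ)/3))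
      + δ * B / (x + δ) ^ ((4:ℝ)/3)
      ≤ (9:ℝ) ^ ((1:ℝ)/3) * B / (x + δ) ^ ((1:ℝ)/3) := by
  have hx0 : (0:ℝ) < x := by linarith
  have ha0 : (0:ℝ) < x + δ := by linarith
  set p := x ^ ((1:ℝ)/3) with hp_def
  set q := (x + δ) ^ ((1:ℝ)/3) with hq_def
  set u := (9:ℝ) ^ ((1:ℝ)/3) with hu_def
  have hp : 0 < p := Real.rpow_pos_of_pos hx0 _
  have hq : 0 < q := Real.rpow_pos_of_pos ha0 _
  have hu : 1 ≤ u := Real.one_le_rpow (by norm_num) (by norm_num)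
  have h43 : (x + δ) ^ ((4:ℝ)/3) = (x + δ) * q := by
    have h : (4:ℝ)/3 = 1 + 1/3 := by norm_num
    rw [hq_def, h, Real.rpow_add ha0, Real.rpow_one]
  have hpq : p ≤ q := Real.rpow_le_rpow hx0.le (by linarith) (by norm_num)
  have hpa : x * q ≤ p * (x + δ) := by
    have hy : x / (x + δ) ≤ (x / (x + δ)) ^ ((1:ℝ)/3) := by
      have h1 : (x / (x + δ)) ^ ((1:ℝ)) ≤ (x / (x + δ)) ^ ((1:ℝ)/3) :=
        Real.rpow_le_rpow_of_exponent_ge (by positivity)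
          (by rw [div_le_one ha0]; linarith) (by norm_num)
      rwa [Real.rpow_one] at h1
    rw [Real.div_rpow hx0.le ha0.le, ← hp_def, ← hq_def, div_le_div_iff₀ ha0 hq] at hy
    linarith [hy]
  rw [h43]
  have hrw : (1 - 9 * δ / (x + δ)) * (u * B / p) = (x + δ - 9 * δ) * (u * B) / ((x + δ) * p) := by
    field_simp
  rw [hrw, div_add_div _ _ (by positivity) (by positivity),
    div_le_div_iff₀ (by positivity) (by positivity)]
  have key : δ * B * p ≤ 8 * δ * (u * B * q) := by
    nlinarith [mul_le_mul_of_nonneg_left hpq (mul_nonneg hδ.le hB),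
      mul_nonneg (mul_nonneg hδ.le hB) hq.le]
  have hmul : u * B * (x * q) ≤ u * B * (p * (x + δ)) :=
    mul_le_mul_of_nonneg_left hpa (by positivity)
  have hstep : (x + δ - 9 * δ) * (u * B) * q + p * (δ * B) ≤ u * B * ((x + δ) * p) := by
    nlinarith [key, hmul]
  nlinarith [mul_le_mul_of_nonneg_right hstep (by positivity : (0:ℝ) ≤ (x + δ) * q)]

/-- Induction lemma for the SHCGM recursion with a multiplicative-error oracle. -/
theorem shcgm_gap_recursion_multiplicative (E : ℕ → ℝ) (C δ : ℝ)
    (hE : ∀ k, 0 ≤ E k) (hC : 0 ≤ C) (hδ0 : 0 < δ) (hδ1 : δ ≤ 1)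
    (hrec : ∀ k : ℕ, 1 ≤ k →
      E (k + 1) ≤ (1 - 9 * δ / (δ * ((k : ℝ) - 1) + 9)) * E k
        + C / (δ * ((k : ℝ) - 1) + 9) ^ ((4 : ℝ) / 3)) :
    ∀ k : ℕ, 1 ≤ k →
      E (k + 1) ≤ (9 : ℝ) ^ ((1 : ℝ) / 3) * (C / δ + E 1)
        / (δ * ((k : ℝ) - 1) + 9) ^ ((1 : ℝ) / 3) := by
  have hB : 0 ≤ C / δ + E 1 := add_nonneg (div_nonneg hC hδ0.le) (hE 1)
  have hu : (1:ℝ) ≤ (9:ℝ) ^ ((1:ℝ)/3) := Real.one_le_rpow (by norm_num) (by norm_num)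
  intro k hk
  induction k, hk using Nat.le_induction with
  | base =>
    have h1 := hrec 1 le_rfl
    norm_num at h1 ⊢
    have h94 : (1:ℝ) ≤ (9:ℝ) ^ ((4:ℝ)/3) := Real.one_le_rpow (by norm_num) (by norm_num)
    have hC9 : C / (9:ℝ) ^ ((4:ℝ)/3) ≤ C / δ := by
      apply div_le_div_of_nonneg_left hC hδ0 <;> linarith
    have h2 : E 2 ≤ C / δ + E 1 := by nlinarith [hE 1, mul_nonneg hδ0.le (hE 1)]
    exact h2
  | succ n hn ih =>
    set B := C / δ + E 1 with hBdef
    set x : ℝ := δ * ((n:ℝ) - 1) + 9 with hxdef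
    have hx9 : (9:ℝ) ≤ x := by
      have : (1:ℝ) ≤ (n:ℝ) := by exact_mod_cast hn
      nlinarith
    have hxa : δ * ((↑(n+1):ℝ) - 1) + 9 = x + δ := by push_cast; ring
    have hr := hrec (n+1) (by omega)
    rw [hxa] at hr ⊢
    have hcoef : 0 ≤ 1 - 9 * δ / (x + δ) := by
      rw [sub_nonneg, div_le_one (by linarith)]
      linarith
    have step1 : E (n + 1 + 1) ≤ (1 - 9 * δ / (x + δ)) * ((9:ℝ) ^ ((1:ℝ)/3) * B / x ^ ((1:ℝ)/3))
        + C / (x + δ) ^ ((4:ℝ)/3) := by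
      refine hr.trans (add_le_add_left ?_ _)
      exact mul_le_mul_of_nonneg_left ih hcoef
    have hCB : C / (x + δ) ^ ((4:ℝ)/3) ≤ δ * B / (x + δ) ^ ((4:ℝ)/3) := by
      apply div_le_div_of_nonneg_right ?_ (by positivity)
      have h1 : δ * B = C + δ * E 1 := by rw [hBdef]; field_simp
      nlinarith [mul_nonneg hδ0.le (hE 1)]
    calc E (n + 1 + 1)
        ≤ (1 - 9 * δ / (x + δ)) * ((9:ℝ) ^ ((1:ℝ)/3) * B / x ^ ((1:ℝ)/3))
            + δ * B / (x + δ) ^ ((4:ℝ)/3) := by linarith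
      _ ≤ (9:ℝ) ^ ((1:ℝ)/3) * B / (x + δ) ^ ((1:ℝ)/3) := shcgm_key x δ B hx9 hδ0 hB
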